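/- For every n ≥ 2 and every word w in the set Dₙ (the n rigid words appearing in the identity scheme Dₙ), the factor monoid M(w) satisfies the identities (0) and (Cₙ): x⁴ ≈ x³, x³t ≈ tx³, and x^{2n} t₁⋯t_{2n} ≈ (t₁x)⋯(t_{2n}x). -/

import Mathlib

abbrev Word := List ℕ

def subst (φ : ℕ → Word) (w : Word) : Word := w.flatMap φ

inductive Deduce (S : Set (Word × Word)) : Word → Word → Prop
  | refl (w : Word) : Deduce S w w
  | symm {u v : Word} : Deduce S u v → Deduce S v u
  | trans {u v w : Word} : Deduce S u v → Deduce S v w → Deduce S u w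
  | step (a b : Word) (φ : ℕ → Word) {s t : Word} (h : (s, t) ∈ S) :
      Deduce S (a ++ subst φ s ++ b) (a ++ subst φ t ++ b)

def FM (w : Word) : Type := Option {u : Word // u <:+: w}

def fmul {w : Word} : FM w → FM w → FM w
  | some u, some v =>
      if h : (u.1 ++ v.1) <:+: w then some ⟨u.1 ++ v.1, h⟩ else none
  | _, _ => none

def fone (w : Word) : FM w := some ⟨[], List.nil_infix⟩

theorem fmul_none_left {w : Word} (a : FM w) : fmul none a = none := rfl

theorem fmul_none_right {w : Word} (a : FM w) : fmul a none = none := by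
  rcases a with _ | u <;> rfl

theorem fmul_some {w : Word} (u v : {u : Word // u <:+: w}) :
    fmul (some u) (some v) =
      if h : (u.1 ++ v.1) <:+: w then some ⟨u.1 ++ v.1, h⟩ else none := rfl

theorem fmul_assoc {w : Word} (a b c : FM w) : fmul (fmul a b) c = fmul a (fmul b c) := by
  rcases a with _ | u
  · rfl
  rcases b with _ | v
  · rfl
  rcases c with _ | t
  · rw [fmul_some]; split <;> rfl
  rw [fmul_some, fmul_some]
  by_cases h : (u.1 ++ v.1 ++ t.1) <:+: w
  · have h1 : (u.1 ++ v.1) <:+: w := List.IsInfix.trans ⟨[], t.1, by simp⟩ h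
    have h2 : (v.1 ++ t.1) <:+: w := List.IsInfix.trans ⟨u.1, [], by simp⟩ h
    rw [dif_pos h1, fmul_some, dif_pos h2, fmul_some, dif_pos h,
      dif_pos (show (u.1 ++ (v.1 ++ t.1)) <:+: w by simpa [List.append_assoc] using h)]
    simp [List.append_assoc]
    rfl
  · by_cases h1 : (u.1 ++ v.1) <:+: w
    · rw [dif_pos h1, fmul_some, dif_neg h]
      by_cases h2 : (v.1 ++ t.1) <:+: w
      · rw [dif_pos h2, fmul_some,
          dif_neg (fun hh => h (by simpa [List.append_assoc] using hh))]
      · rw [dif_neg h2]; rfl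
    · rw [dif_neg h1]; change none = _
      by_cases h2 : (v.1 ++ t.1) <:+: w
      · rw [dif_pos h2, fmul_some,
          dif_neg (fun hh => h1 (List.IsInfix.trans ⟨[], t.1, by simp⟩ hh))]
      · rw [dif_neg h2]; rfl

instance (w : Word) : Monoid (FM w) where
  mul := fmul
  one := fone w
  mul_assoc := fmul_assoc
  one_mul := by
    rintro (_ | u)
    · rfl
    · show fmul (fone w) (some u) = some u
      rw [fone, fmul_some, dif_pos (by simpa using u.2)]
      simp
      rfl
  mul_one := by
    rintro (_ | u)
    · rfl
    · show fmul (some u) (fone w) = some u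
      rw [fone, fmul_some, dif_pos (by simpa using u.2)]
      simp
      rfl

def SatId (M : Type) [Monoid M] (p : Word × Word) : Prop :=
  ∀ φ : ℕ → M, (p.1.map φ).prod = (p.2.map φ).prod

def VSat (E : Set (Word × Word)) (p : Word × Word) : Prop :=
  ∀ (M : Type) [Monoid M], (∀ q ∈ E, SatId M q) → SatId M p

def ids0 : Set (Word × Word) :=
  {([0,1,2,0,3,1],[1,0,2,0,3,1]), ([0,2,0,1,3,1],[0,2,1,0,3,1]), ([0,2,1,3,0,1],[0,2,1,3,1,0])}

def idA (n : ℕ) : Word × Word :=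
  (List.replicate n 0 ++ (List.range n).map (· + 1),
   ((List.range n).map (fun i => [i + 1, 0])).flatten)

def rigid (e₀ : ℕ) (es : List ℕ) : Word :=
  List.replicate e₀ 0 ++ (es.zipIdx.map (fun p => (p.2 + 1) :: List.replicate p.1 0)).flatten

def Bword (n i : ℕ) : Word := List.replicate i 0 ++ 1 :: List.replicate (n - 1 - i) 0

def wmr (m r : ℕ) : Word := rigid (m - 1) (List.replicate r (m - 1))

/-- The `j`-th word of `Dₙ`: the rigid word with `n` blocks of `x`'s, the `j`-th
exponent equal to `1` and all other exponents equal to `2`. -/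
def Dword (n j : ℕ) : Word :=
  rigid (if j = 0 then 1 else 2)
    ((List.range (n - 1)).map (fun i => if i + 1 = j then 1 else 2))

namespace Stmt11
open List

variable {w : Word}

theorem prod_of_none_mem : ∀ (l : List (FM w)), (none : FM w) ∈ l → l.prod = (none : FM w) := by
  intro l hl
  induction l with
  | nil => cases hl
  | cons a l ih =>
    rw [List.prod_cons]
    rcases List.mem_cons.mp hl with h | h
    · rw [← h]; exact fmul_none_left _
    · rw [ih h]; exact fmul_none_right a

abbrev fnone (w : Word) : FM w := none

def inj (u : {u : Word // u <:+: w}) : FM w := some u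

theorem prod_map_some (l : List {u : Word // u <:+: w}) :
    (l.map inj).prod =
      if h : (l.map (fun u => u.1)).flatten <:+: w then
        inj ⟨(l.map (fun u => u.1)).flatten, h⟩ else fnone w := by
  induction l with
  | nil =>
    rw [List.map_nil, List.prod_nil, List.map_nil, List.flatten_nil,
      dif_pos List.nil_infix]
    rfl
  | cons u l ih =>
    rw [List.map_cons, List.prod_cons, ih, List.map_cons, List.flatten_cons]
    by_cases h : (u.1 ++ (l.map (fun u => u.1)).flatten) <:+: w
    · have hrest : (l.map (fun u => u.1)).flatten <:+: w :=
        ((List.suffix_append u.1 _).isInfix).trans h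
      rw [dif_pos hrest, dif_pos h]
      show fmul (some u) (some ⟨(l.map (fun u => u.1)).flatten, hrest⟩) = _
      rw [fmul_some, dif_pos h]
      rfl
    · rw [dif_neg h]
      by_cases h2 : (l.map (fun u => u.1)).flatten <:+: w
      · rw [dif_pos h2]
        show fmul (some u) (some ⟨(l.map (fun u => u.1)).flatten, h2⟩) = _
        rw [fmul_some, dif_neg h]
      · rw [dif_neg h2]
        exact fmul_none_right _

theorem dite_word_congr {z₁ z₂ : Word} (h : z₁ = z₂) :
    (if h : z₁ <:+: w then (inj ⟨z₁, h⟩ : FM w) else fnone w) =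
    (if h : z₂ <:+: w then (inj ⟨z₂, h⟩ : FM w) else fnone w) := by
  subst h; rfl

theorem not_infix_of_count {z : Word} {c : ℕ} (h2 : w.count c < z.count c) :
    ¬ z <:+: w :=
  fun h => absurd (h.sublist.count_le c) (by omega)

/-- `g l = true` iff `l` has no three consecutive zeros. -/
def g : Word → Bool
  | [] => true
  | a :: l => if a = 0 ∧ l.take 2 = [0, 0] then false else g l

theorem g_cons (a : ℕ) (l : Word) :
    g (a :: l) = if a = 0 ∧ l.take 2 = [0, 0] then false else g l := rfl

theorem g_append_triple (p s : Word) : g (p ++ [0,0,0] ++ s) = false := by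
  induction p with
  | nil => simp [g]
  | cons a p ih =>
    rw [List.cons_append, List.cons_append, g_cons, ih]
    split <;> rfl

theorem no_triple_of_g {l : Word} (h : g l = true) : ¬ [0,0,0] <:+: l := by
  rintro ⟨p, s, rfl⟩
  rw [g_append_triple] at h
  exact Bool.false_ne_true h

theorem g_run {e c : ℕ} (he : e ≤ 2) (hc : c ≠ 0) (l : Word) :
    g (List.replicate e 0 ++ c :: l) = g l := by
  have h1 : g (c :: l) = g l := by simp [g, hc]
  have h2 : g (0 :: c :: l) = g l := by
    rw [show g (0 :: c :: l) = g (c :: l) from by simp [g, hc], h1]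
  interval_cases e
  · simpa using h1
  · simpa [List.replicate] using h2
  · show g (0 :: 0 :: c :: l) = g l
    rw [show g (0 :: 0 :: c :: l) = g (0 :: c :: l) from by simp [g, hc], h2]

theorem g_blocks : ∀ (bs : List Word),
    (∀ b ∈ bs, ∃ c e, c ≠ 0 ∧ e ≤ 2 ∧ b = c :: List.replicate e 0) →
    ∀ e₀ ≤ 2, g (List.replicate e₀ 0 ++ bs.flatten) = true := by
  intro bs
  induction bs with
  | nil =>
    intro _ e₀ he
    interval_cases e₀ <;> decide
  | cons b bs ih =>
    intro hb e₀ he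
    obtain ⟨c, e, hc, he2, rfl⟩ := hb b List.mem_cons_self
    rw [List.flatten_cons, List.cons_append, g_run he hc]
    exact ih (fun b h => hb b (List.mem_cons_of_mem _ h)) e he2

theorem swap_zero_append {u v : Word} (hu : ∀ a ∈ u, a = 0) (hv : ∀ a ∈ v, a = 0)
    (X : Word) : u ++ (v ++ X) = v ++ (u ++ X) := by
  rw [List.eq_replicate_length.mpr hu, List.eq_replicate_length.mpr hv,
    ← List.append_assoc, ← List.append_assoc, ← List.replicate_add, ← List.replicate_add,
    Nat.add_comm]

theorem flatten_replicate_nil (m : ℕ) : (List.replicate m ([] : Word)).flatten = [] := by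
  induction m with
  | zero => rfl
  | succ m ih => rw [List.replicate_succ, List.flatten_cons, ih]; rfl

theorem count_flatten_replicate (c m : ℕ) (x : Word) :
    (List.replicate m x).flatten.count c = m * x.count c := by
  induction m with
  | zero => simp
  | succ m ih =>
    rw [List.replicate_succ, List.flatten_cons, List.count_append, ih, Nat.succ_mul]
    omega

theorem list_map_range_sum (f : ℕ → ℕ) (m : ℕ) :
    ((List.range m).map f).sum = ∑ i ∈ Finset.range m, f i := by
  induction m with
  | zero => simp
  | succ m ih =>
    rw [List.range_succ, Finset.sum_range_succ, List.map_append, List.sum_append, ih]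
    simp

theorem sum_map_ite (a : ℕ) : ∀ (l : List ℕ),
    (l.map (fun i => if i = a then 1 else 0)).sum = l.count a := by
  intro l
  induction l with
  | nil => rfl
  | cons b l ih =>
    by_cases hb : b = a <;> simp [List.count_cons, ih, hb, Nat.add_comm]

theorem count_Dword_ne (n j c : ℕ) (hc : c ≠ 0) : (Dword n j).count c ≤ 1 := by
  unfold Dword rigid
  rw [List.count_append, List.count_replicate, List.count_flatten, List.map_map]
  have h1 : List.map (List.count c ∘ fun p : ℕ × ℕ => (p.2 + 1) :: List.replicate p.1 0)
      (((List.range (n - 1)).map (fun i => if i + 1 = j then 1 else 2)).zipIdx)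
      = List.map ((fun i => if i = c - 1 then 1 else 0) ∘ Prod.snd)
      (((List.range (n - 1)).map (fun i => if i + 1 = j then 1 else 2)).zipIdx) := by
    apply List.map_congr_left
    intro p _
    simp only [Function.comp_apply, List.count_cons, List.count_replicate, beq_iff_eq]
    rw [if_neg (fun h => hc h.symm), if_congr (show p.2 + 1 = c ↔ p.2 = c - 1 by omega) rfl rfl]
    omega
  rw [h1, ← List.map_map, List.zipIdx_map_snd, ← List.range_eq_range', sum_map_ite]
  have h2 := (List.nodup_iff_count_le_one.mp (List.nodup_range (n :=
    ((List.map (fun i => if i + 1 = j then 1 else 2) (List.range (n - 1))).length)))) (c - 1)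
  have h3 : (if (0 == c) = true then (if j = 0 then 1 else 2) else 0) = 0 := by
    rw [if_neg]
    simp only [beq_iff_eq]
    exact fun h => hc h.symm
  omega

theorem count_Dword_zero (n j : ℕ) (hn : 2 ≤ n) (hj : j < n) :
    (Dword n j).count 0 < 2 * n := by
  unfold Dword rigid
  rw [List.count_append, List.count_replicate, List.count_flatten, List.map_map]
  have h1 : List.map (List.count 0 ∘ fun p : ℕ × ℕ => (p.2 + 1) :: List.replicate p.1 0)
      (((List.range (n - 1)).map (fun i => if i + 1 = j then 1 else 2)).zipIdx)
      = List.map Prod.fst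
      (((List.range (n - 1)).map (fun i => if i + 1 = j then 1 else 2)).zipIdx) := by
    apply List.map_congr_left
    intro p _
    simp [List.count_cons, List.count_replicate]
  rw [h1, List.zipIdx_map_fst, list_map_range_sum]
  rw [if_pos (by rfl)]
  by_cases hj0 : j = 0
  · subst hj0
    rw [if_pos rfl]
    have h2 : ∑ i ∈ Finset.range (n - 1), (if i + 1 = 0 then 1 else 2) = 2 * (n - 1) := by
      rw [Finset.sum_congr rfl (fun i _ => if_neg (by omega))]
      simp [Finset.sum_const, Finset.card_range, Nat.mul_comm]
    omega
  · rw [if_neg hj0]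
    have hjm : j - 1 ∈ Finset.range (n - 1) := Finset.mem_range.mpr (by omega)
    rw [← Finset.sum_erase_add _ _ hjm, if_pos (by omega)]
    have h2 : ∑ i ∈ (Finset.range (n - 1)).erase (j - 1), (if i + 1 = j then 1 else 2)
        ≤ (n - 2) * 2 := by
      have := Finset.sum_le_card_nsmul ((Finset.range (n - 1)).erase (j - 1))
        (fun i => if i + 1 = j then 1 else 2) 2 (fun i _ => by split <;> omega)
      rw [Finset.card_erase_of_mem hjm, Finset.card_range] at this
      simpa [smul_eq_mul, Nat.sub_sub] using this
    omega

theorem no_triple_Dword (n j : ℕ) : ¬ [0,0,0] <:+: Dword n j := by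
  apply no_triple_of_g
  unfold Dword rigid
  apply g_blocks
  · intro b hb
    rw [List.mem_map] at hb
    obtain ⟨p, hp, rfl⟩ := hb
    refine ⟨p.2 + 1, p.1, Nat.succ_ne_zero _, ?_, rfl⟩
    have h2 : p.1 ∈ (List.range (n - 1)).map (fun i => if i + 1 = j then 1 else 2) := by
      rw [← List.zipIdx_map_fst 0 ((List.range (n - 1)).map (fun i => if i + 1 = j then 1 else 2))]
      exact List.mem_map.mpr ⟨p, hp, rfl⟩
    rw [List.mem_map] at h2
    obtain ⟨i, _, hi⟩ := h2
    rw [← hi]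
    split <;> omega
  · split <;> omega

theorem cube_not_infix (h3 : ¬ [0,0,0] <:+: w) (h1 : ∀ c, c ≠ 0 → w.count c ≤ 1)
    {u : Word} (hu : u ≠ []) : ¬ (u ++ u ++ u) <:+: w := by
  intro h
  by_cases hz : ∀ a ∈ u, a = 0
  · have hrep : u = List.replicate u.length 0 := List.eq_replicate_length.mpr hz
    apply h3
    refine List.IsInfix.trans ?_ h
    have hlen : 1 ≤ u.length := List.length_pos_iff.mpr hu
    rw [hrep, ← List.replicate_add, ← List.replicate_add]
    obtain ⟨k, hk⟩ : ∃ k, u.length + u.length + u.length = 3 + k := ⟨3 * u.length - 3, by omega⟩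
    rw [hk, List.replicate_add]
    exact (List.prefix_append (List.replicate 3 0) _).isInfix
  · push_neg at hz
    obtain ⟨c, hcm, hc⟩ := hz
    have hcount := h.sublist.count_le c
    rw [List.count_append, List.count_append] at hcount
    have h1c := h1 c hc
    have hpos : 0 < u.count c := List.count_pos_iff.mpr hcm
    omega

end Stmt11


/-- For every `n ≥ 2` and every word `w ∈ Dₙ`, the factor monoid `M(w)`
satisfies the identities (0) and (Cₙ): `x⁴ ≈ x³`, `x³t ≈ tx³`, and
`x^{2n} t₁⋯t_{2n} ≈ (t₁x)⋯(t_{2n}x)`. -/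
theorem stmt11 (n : ℕ) (hn : 2 ≤ n) (j : ℕ) (hj : j < n) :
    ∀ p ∈ (ids0 ∪ {(List.replicate 4 0, List.replicate 3 0),
        (List.replicate 3 0 ++ [1], 1 :: List.replicate 3 0),
        idA (2 * n)} : Set (Word × Word)),
      SatId (FM (Dword n j)) p := by
  have h3 : ¬ [0,0,0] <:+: Dword n j := Stmt11.no_triple_Dword n j
  have h1 : ∀ c, c ≠ 0 → (Dword n j).count c ≤ 1 := fun c hc => Stmt11.count_Dword_ne n j c hc
  have h0 : (Dword n j).count 0 < 2 * n := Stmt11.count_Dword_zero n j hn hj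
  intro p hp
  simp only [ids0, Set.mem_union, Set.mem_insert_iff, Set.mem_singleton_iff] at hp
  rcases hp with (hp | hp | hp) | (hp | hp | hp) <;> subst hp <;> intro φ
  · -- identity (0) #1 : xy t x t' y ≈ yx t x t' y
    show (List.map φ [0,1,2,0,3,1]).prod = (List.map φ [1,0,2,0,3,1]).prod
    rcases ha : φ 0 with _ | u
    · rw [Stmt11.prod_of_none_mem (List.map φ [0,1,2,0,3,1]) (List.mem_map.mpr ⟨0, by simp, ha⟩),
        Stmt11.prod_of_none_mem (List.map φ [1,0,2,0,3,1]) (List.mem_map.mpr ⟨0, by simp, ha⟩)]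
    rcases hb : φ 1 with _ | v
    · rw [Stmt11.prod_of_none_mem (List.map φ [0,1,2,0,3,1]) (List.mem_map.mpr ⟨1, by simp, hb⟩),
        Stmt11.prod_of_none_mem (List.map φ [1,0,2,0,3,1]) (List.mem_map.mpr ⟨1, by simp, hb⟩)]
    rcases hc : φ 2 with _ | c
    · rw [Stmt11.prod_of_none_mem (List.map φ [0,1,2,0,3,1]) (List.mem_map.mpr ⟨2, by simp, hc⟩),
        Stmt11.prod_of_none_mem (List.map φ [1,0,2,0,3,1]) (List.mem_map.mpr ⟨2, by simp, hc⟩)]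
    rcases hd : φ 3 with _ | d
    · rw [Stmt11.prod_of_none_mem (List.map φ [0,1,2,0,3,1]) (List.mem_map.mpr ⟨3, by simp, hd⟩),
        Stmt11.prod_of_none_mem (List.map φ [1,0,2,0,3,1]) (List.mem_map.mpr ⟨3, by simp, hd⟩)]
    rw [show List.map φ [0,1,2,0,3,1] = List.map Stmt11.inj [u,v,c,u,d,v] from by
          simp [ha, hb, hc, hd, Stmt11.inj],
        show List.map φ [1,0,2,0,3,1] = List.map Stmt11.inj [v,u,c,u,d,v] from by
          simp [ha, hb, hc, hd, Stmt11.inj],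
        Stmt11.prod_map_some, Stmt11.prod_map_some]
    by_cases hu : ∀ a ∈ u.1, a = 0
    · by_cases hv : ∀ a ∈ v.1, a = 0
      · apply Stmt11.dite_word_congr
        simp only [List.map_cons, List.map_nil, List.flatten_cons, List.flatten_nil]
        exact Stmt11.swap_zero_append hu hv _
      · push_neg at hv
        obtain ⟨c0, hc0m, hc0⟩ := hv
        have hcnt : 0 < v.1.count c0 := List.count_pos_iff.mpr hc0m
        have hw := h1 c0 hc0
        rw [dif_neg (Stmt11.not_infix_of_count (c := c0)
              (by simp [List.count_append]; omega)),
            dif_neg (Stmt11.not_infix_of_count (c := c0)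
              (by simp [List.count_append]; omega))]
    · push_neg at hu
      obtain ⟨c0, hc0m, hc0⟩ := hu
      have hcnt : 0 < u.1.count c0 := List.count_pos_iff.mpr hc0m
      have hw := h1 c0 hc0
      rw [dif_neg (Stmt11.not_infix_of_count (c := c0)
            (by simp [List.count_append]; omega)),
          dif_neg (Stmt11.not_infix_of_count (c := c0)
            (by simp [List.count_append]; omega))]
  · -- identity (0) #2 : x t x y t' y ≈ x t y x t' y
    show (List.map φ [0,2,0,1,3,1]).prod = (List.map φ [0,2,1,0,3,1]).prod
    rcases ha : φ 0 with _ | u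
    · rw [Stmt11.prod_of_none_mem (List.map φ [0,2,0,1,3,1]) (List.mem_map.mpr ⟨0, by simp, ha⟩),
        Stmt11.prod_of_none_mem (List.map φ [0,2,1,0,3,1]) (List.mem_map.mpr ⟨0, by simp, ha⟩)]
    rcases hb : φ 1 with _ | v
    · rw [Stmt11.prod_of_none_mem (List.map φ [0,2,0,1,3,1]) (List.mem_map.mpr ⟨1, by simp, hb⟩),
        Stmt11.prod_of_none_mem (List.map φ [0,2,1,0,3,1]) (List.mem_map.mpr ⟨1, by simp, hb⟩)]
    rcases hc : φ 2 with _ | c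
    · rw [Stmt11.prod_of_none_mem (List.map φ [0,2,0,1,3,1]) (List.mem_map.mpr ⟨2, by simp, hc⟩),
        Stmt11.prod_of_none_mem (List.map φ [0,2,1,0,3,1]) (List.mem_map.mpr ⟨2, by simp, hc⟩)]
    rcases hd : φ 3 with _ | d
    · rw [Stmt11.prod_of_none_mem (List.map φ [0,2,0,1,3,1]) (List.mem_map.mpr ⟨3, by simp, hd⟩),
        Stmt11.prod_of_none_mem (List.map φ [0,2,1,0,3,1]) (List.mem_map.mpr ⟨3, by simp, hd⟩)]
    rw [show List.map φ [0,2,0,1,3,1] = List.map Stmt11.inj [u,c,u,v,d,v] from by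
          simp [ha, hb, hc, hd, Stmt11.inj],
        show List.map φ [0,2,1,0,3,1] = List.map Stmt11.inj [u,c,v,u,d,v] from by
          simp [ha, hb, hc, hd, Stmt11.inj],
        Stmt11.prod_map_some, Stmt11.prod_map_some]
    by_cases hu : ∀ a ∈ u.1, a = 0
    · by_cases hv : ∀ a ∈ v.1, a = 0
      · apply Stmt11.dite_word_congr
        simp only [List.map_cons, List.map_nil, List.flatten_cons, List.flatten_nil]
        exact congrArg (u.1 ++ ·) (congrArg (c.1 ++ ·) (Stmt11.swap_zero_append hu hv _))
      · push_neg at hv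
        obtain ⟨c0, hc0m, hc0⟩ := hv
        have hcnt : 0 < v.1.count c0 := List.count_pos_iff.mpr hc0m
        have hw := h1 c0 hc0
        rw [dif_neg (Stmt11.not_infix_of_count (c := c0)
              (by simp [List.count_append]; omega)),
            dif_neg (Stmt11.not_infix_of_count (c := c0)
              (by simp [List.count_append]; omega))]
    · push_neg at hu
      obtain ⟨c0, hc0m, hc0⟩ := hu
      have hcnt : 0 < u.1.count c0 := List.count_pos_iff.mpr hc0m
      have hw := h1 c0 hc0
      rw [dif_neg (Stmt11.not_infix_of_count (c := c0)
            (by simp [List.count_append]; omega)),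
          dif_neg (Stmt11.not_infix_of_count (c := c0)
            (by simp [List.count_append]; omega))]
  · -- identity (0) #3 : x t y t' xy ≈ x t y t' yx
    show (List.map φ [0,2,1,3,0,1]).prod = (List.map φ [0,2,1,3,1,0]).prod
    rcases ha : φ 0 with _ | u
    · rw [Stmt11.prod_of_none_mem (List.map φ [0,2,1,3,0,1]) (List.mem_map.mpr ⟨0, by simp, ha⟩),
        Stmt11.prod_of_none_mem (List.map φ [0,2,1,3,1,0]) (List.mem_map.mpr ⟨0, by simp, ha⟩)]
    rcases hb : φ 1 with _ | v
    · rw [Stmt11.prod_of_none_mem (List.map φ [0,2,1,3,0,1]) (List.mem_map.mpr ⟨1, by simp, hb⟩),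
        Stmt11.prod_of_none_mem (List.map φ [0,2,1,3,1,0]) (List.mem_map.mpr ⟨1, by simp, hb⟩)]
    rcases hc : φ 2 with _ | c
    · rw [Stmt11.prod_of_none_mem (List.map φ [0,2,1,3,0,1]) (List.mem_map.mpr ⟨2, by simp, hc⟩),
        Stmt11.prod_of_none_mem (List.map φ [0,2,1,3,1,0]) (List.mem_map.mpr ⟨2, by simp, hc⟩)]
    rcases hd : φ 3 with _ | d
    · rw [Stmt11.prod_of_none_mem (List.map φ [0,2,1,3,0,1]) (List.mem_map.mpr ⟨3, by simp, hd⟩),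
        Stmt11.prod_of_none_mem (List.map φ [0,2,1,3,1,0]) (List.mem_map.mpr ⟨3, by simp, hd⟩)]
    rw [show List.map φ [0,2,1,3,0,1] = List.map Stmt11.inj [u,c,v,d,u,v] from by
          simp [ha, hb, hc, hd, Stmt11.inj],
        show List.map φ [0,2,1,3,1,0] = List.map Stmt11.inj [u,c,v,d,v,u] from by
          simp [ha, hb, hc, hd, Stmt11.inj],
        Stmt11.prod_map_some, Stmt11.prod_map_some]
    by_cases hu : ∀ a ∈ u.1, a = 0
    · by_cases hv : ∀ a ∈ v.1, a = 0
      · apply Stmt11.dite_word_congr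
        simp only [List.map_cons, List.map_nil, List.flatten_cons, List.flatten_nil]
        exact congrArg (u.1 ++ ·) (congrArg (c.1 ++ ·) (congrArg (v.1 ++ ·)
          (congrArg (d.1 ++ ·) (Stmt11.swap_zero_append hu hv _))))
      · push_neg at hv
        obtain ⟨c0, hc0m, hc0⟩ := hv
        have hcnt : 0 < v.1.count c0 := List.count_pos_iff.mpr hc0m
        have hw := h1 c0 hc0
        rw [dif_neg (Stmt11.not_infix_of_count (c := c0)
              (by simp [List.count_append]; omega)),
            dif_neg (Stmt11.not_infix_of_count (c := c0)
              (by simp [List.count_append]; omega))]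
    · push_neg at hu
      obtain ⟨c0, hc0m, hc0⟩ := hu
      have hcnt : 0 < u.1.count c0 := List.count_pos_iff.mpr hc0m
      have hw := h1 c0 hc0
      rw [dif_neg (Stmt11.not_infix_of_count (c := c0)
            (by simp [List.count_append]; omega)),
          dif_neg (Stmt11.not_infix_of_count (c := c0)
            (by simp [List.count_append]; omega))]
  · -- x⁴ ≈ x³
    show (List.map φ [0,0,0,0]).prod = (List.map φ [0,0,0]).prod
    rcases ha : φ 0 with _ | u
    · rw [Stmt11.prod_of_none_mem (List.map φ [0,0,0,0]) (List.mem_map.mpr ⟨0, by simp, ha⟩),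
        Stmt11.prod_of_none_mem (List.map φ [0,0,0]) (List.mem_map.mpr ⟨0, by simp, ha⟩)]
    rw [show List.map φ [0,0,0,0] = List.map Stmt11.inj [u,u,u,u] from by
          simp [ha, Stmt11.inj],
        show List.map φ [0,0,0] = List.map Stmt11.inj [u,u,u] from by
          simp [ha, Stmt11.inj],
        Stmt11.prod_map_some, Stmt11.prod_map_some]
    by_cases hu : u.1 = []
    · exact Stmt11.dite_word_congr (by simp [hu])
    · have hcube := Stmt11.cube_not_infix h3 h1 hu
      rw [dif_neg (fun habs => hcube (List.IsInfix.trans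
            ⟨[], u.1 ++ [], by simp [List.append_assoc]⟩ habs)),
          dif_neg (fun habs => hcube (List.IsInfix.trans
            ⟨[], [], by simp [List.append_assoc]⟩ habs))]
  · -- x³ t ≈ t x³
    show (List.map φ [0,0,0,1]).prod = (List.map φ [1,0,0,0]).prod
    rcases ha : φ 0 with _ | u
    · rw [Stmt11.prod_of_none_mem (List.map φ [0,0,0,1]) (List.mem_map.mpr ⟨0, by simp, ha⟩),
        Stmt11.prod_of_none_mem (List.map φ [1,0,0,0]) (List.mem_map.mpr ⟨0, by simp, ha⟩)]
    rcases hb : φ 1 with _ | v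
    · rw [Stmt11.prod_of_none_mem (List.map φ [0,0,0,1]) (List.mem_map.mpr ⟨1, by simp, hb⟩),
        Stmt11.prod_of_none_mem (List.map φ [1,0,0,0]) (List.mem_map.mpr ⟨1, by simp, hb⟩)]
    rw [show List.map φ [0,0,0,1] = List.map Stmt11.inj [u,u,u,v] from by
          simp [ha, hb, Stmt11.inj],
        show List.map φ [1,0,0,0] = List.map Stmt11.inj [v,u,u,u] from by
          simp [ha, hb, Stmt11.inj],
        Stmt11.prod_map_some, Stmt11.prod_map_some]
    by_cases hu : u.1 = []
    · exact Stmt11.dite_word_congr (by simp [hu])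
    · have hcube := Stmt11.cube_not_infix h3 h1 hu
      rw [dif_neg (fun habs => hcube (List.IsInfix.trans
            ⟨[], v.1 ++ [], by simp [List.append_assoc]⟩ habs)),
          dif_neg (fun habs => hcube (List.IsInfix.trans
            ⟨v.1, [], by simp [List.append_assoc]⟩ habs))]
  · -- idA (2n)
    show (List.map φ (List.replicate (2*n) 0 ++ (List.range (2*n)).map (· + 1))).prod
        = (List.map φ (((List.range (2*n)).map (fun i => [i + 1, 0])).flatten)).prod
    rcases ha : φ 0 with _ | u
    · rw [Stmt11.prod_of_none_mem (List.map φ (List.replicate (2*n) 0 ++ (List.range (2*n)).map (· + 1))) (List.mem_map.mpr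
            ⟨0, List.mem_append_left _ (List.mem_replicate.mpr ⟨by omega, rfl⟩), ha⟩),
          Stmt11.prod_of_none_mem (List.map φ (((List.range (2*n)).map (fun i => [i + 1, 0])).flatten)) (List.mem_map.mpr
            ⟨0, List.mem_flatten.mpr ⟨[1,0], List.mem_map.mpr
              ⟨0, List.mem_range.mpr (by omega), rfl⟩, by simp⟩, ha⟩)]
    by_cases hex : ∃ i, i < 2*n ∧ φ (i+1) = (none : FM (Dword n j))
    · obtain ⟨i, hi, hni⟩ := hex
      rw [Stmt11.prod_of_none_mem (List.map φ (List.replicate (2*n) 0 ++ (List.range (2*n)).map (· + 1))) (List.mem_map.mpr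
            ⟨i+1, List.mem_append_right _ (List.mem_map.mpr
              ⟨i, List.mem_range.mpr hi, rfl⟩), hni⟩),
          Stmt11.prod_of_none_mem (List.map φ (((List.range (2*n)).map (fun i => [i + 1, 0])).flatten)) (List.mem_map.mpr
            ⟨i+1, List.mem_flatten.mpr ⟨[i+1,0], List.mem_map.mpr
              ⟨i, List.mem_range.mpr hi, rfl⟩, by simp⟩, hni⟩)]
    · have hex' : ∀ i, i < 2*n → φ (i+1) ≠ (none : FM (Dword n j)) :=
        fun i hi hni => hex ⟨i, hi, hni⟩
      set v : ℕ → {u : Word // u <:+: Dword n j} :=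
        fun i => (φ (i+1)).getD ⟨[], List.nil_infix⟩ with hvdef
      have hvs : ∀ i, i < 2*n → φ (i+1) = some (v i) := by
        intro i hi
        rcases hh : φ (i+1) with _ | x
        · exact absurd hh (hex' i hi)
        · simp [hvdef, hh]
          rfl
      have hL : List.map φ (List.replicate (2*n) 0 ++ (List.range (2*n)).map (· + 1))
          = List.map Stmt11.inj (List.replicate (2*n) u ++ (List.range (2*n)).map v) := by
        rw [List.map_append, List.map_append, List.map_replicate, List.map_replicate, ha,
          List.map_map, List.map_map]
        congr 1
        apply List.map_congr_left
        intro i hi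
        simp only [Function.comp_apply]
        rw [hvs i (List.mem_range.mp hi)]
        rfl
      have hR : List.map φ (((List.range (2*n)).map (fun i => [i + 1, 0])).flatten)
          = List.map Stmt11.inj (((List.range (2*n)).map (fun i => [v i, u])).flatten) := by
        rw [List.map_flatten, List.map_flatten, List.map_map, List.map_map]
        congr 1
        apply List.map_congr_left
        intro i hi
        simp only [Function.comp_apply, List.map_cons, List.map_nil]
        rw [hvs i (List.mem_range.mp hi), ha]
        rfl
      rw [hL, hR, Stmt11.prod_map_some, Stmt11.prod_map_some]
      by_cases hu : u.1 = []
      · apply Stmt11.dite_word_congr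
        rw [List.map_append, List.flatten_append, List.map_replicate, hu,
          Stmt11.flatten_replicate_nil, List.nil_append, List.map_flatten,
          List.map_map, List.flatten_flatten, List.map_map, List.map_map]
        congr 1
        apply List.map_congr_left
        intro i _
        simp [hu]
      · have hc0m : u.1.head hu ∈ u.1 := List.head_mem hu
        have hcnt : 0 < u.1.count (u.1.head hu) := List.count_pos_iff.mpr hc0m
        have hz1 : 2*n * u.1.count (u.1.head hu) ≤
            ((List.map (fun u => u.1) (List.replicate (2*n) u ++
              (List.range (2*n)).map v)).flatten).count (u.1.head hu) := by
          rw [List.map_append, List.flatten_append, List.count_append, List.map_replicate,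
            Stmt11.count_flatten_replicate]
          omega
        have hz2 : 2*n * u.1.count (u.1.head hu) ≤
            ((List.map (fun u => u.1)
              (((List.range (2*n)).map (fun i => [v i, u])).flatten)).flatten).count
              (u.1.head hu) := by
          rw [List.map_flatten, List.map_map, List.flatten_flatten, List.map_map,
            List.count_flatten, List.map_map]
          calc 2*n * u.1.count (u.1.head hu)
              = ((List.range (2*n)).map (fun _ => u.1.count (u.1.head hu))).sum := by
                rw [List.map_const', List.sum_replicate, List.length_range, smul_eq_mul]
            _ ≤ _ := List.sum_le_sum (fun i _ => by
                simp only [Function.comp_apply, List.map_cons, List.map_nil,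
                  List.flatten_cons, List.flatten_nil, List.count_append]
                omega)
        have hwc : (Dword n j).count (u.1.head hu) < 2*n * u.1.count (u.1.head hu) := by
          have h2n : 2*n ≤ 2*n * u.1.count (u.1.head hu) :=
            Nat.le_mul_of_pos_right _ hcnt
          by_cases hz : u.1.head hu = 0
          · rw [hz]; rw [hz] at h2n; omega
          · have := h1 _ hz
            omega
        rw [dif_neg (Stmt11.not_infix_of_count (c := u.1.head hu) (by omega)),
            dif_neg (Stmt11.not_infix_of_count (c := u.1.head hu) (by omega))]
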